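/- Let λ_i ≥ λ_j > 0 and ε > 0, and set ε_{ij} = (λ_i/λ_j + λ_j/λ_i + λ_i λ_j t)^{−1} for some t ≥ 0. If (λ_j/λ_i) ε_{ij} ≤ ε and (λ_i/λ_j) ε_{ij} ≤ 1/2 + ε with ε ≤ 1/8, then −2 λ_i ∂ε_{ij}/∂λ_i − λ_j ∂ε_{ij}/∂λ_j ≥ (1 − 4ε) ε_{ij}. -/

import Mathlib

/-- The bubble interaction `ε_{ij} = (λ_i/λ_j + λ_j/λ_i + λ_i λ_j t)⁻¹`. -/
noncomputable def epsInteraction (li lj t : ℝ) : ℝ :=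
  (li / lj + lj / li + li * lj * t)⁻¹

lemma epsInteraction_hasDerivAt (li lj t : ℝ) (hi : 0 < li) (hj : 0 < lj) (ht : 0 ≤ t) :
    HasDerivAt (fun l => epsInteraction l lj t)
      (-(1 / lj - lj / li ^ 2 + lj * t) / (li / lj + lj / li + li * lj * t) ^ 2) li := by
  have hD : 0 < li / lj + lj / li + li * lj * t := by positivity
  have h1 : HasDerivAt (fun l : ℝ => l / lj + lj / l + l * lj * t)
      (1 / lj - lj / li ^ 2 + lj * t) li := by
    have ha : HasDerivAt (fun l : ℝ => l / lj) (1 / lj) li := by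
      simpa using (hasDerivAt_id li).div_const lj
    have hb : HasDerivAt (fun l : ℝ => lj / l) (-(lj / li ^ 2)) li := by
      have := ((hasDerivAt_inv hi.ne').const_mul lj)
      simpa [div_eq_mul_inv, mul_comm, neg_mul, mul_neg] using this
    have hc : HasDerivAt (fun l : ℝ => l * lj * t) (lj * t) li := by
      have := (hasDerivAt_id li).mul_const (lj * t)
      simpa [mul_assoc] using this
    simpa [sub_eq_add_neg] using (ha.fun_add hb).fun_add hc
  have := h1.fun_inv hD.ne'
  simpa [epsInteraction, sub_eq_add_neg] using this

theorem interaction_derivative_lower_bound (li lj t eps : ℝ)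
    (hj : 0 < lj) (hij : lj ≤ li) (ht : 0 ≤ t) (heps : 0 < eps) (heps' : eps ≤ 1 / 8)
    (h1 : (lj / li) * epsInteraction li lj t ≤ eps)
    (h2 : (li / lj) * epsInteraction li lj t ≤ 1 / 2 + eps) :
    -2 * li * deriv (fun l => epsInteraction l lj t) li
        - lj * deriv (fun l => epsInteraction li l t) lj
      ≥ (1 - 4 * eps) * epsInteraction li lj t := by
  have hi : 0 < li := lt_of_lt_of_le hj hij
  have hDi := (epsInteraction_hasDerivAt li lj t hi hj ht).deriv
  have hDj : deriv (fun l => epsInteraction li l t) lj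
      = -(1 / li - li / lj ^ 2 + li * t) / (lj / li + li / lj + lj * li * t) ^ 2 := by
    have h := (epsInteraction_hasDerivAt lj li t hj hi ht).deriv
    have heq : (fun l => epsInteraction li l t) = (fun l => epsInteraction l li t) := by
      funext l
      simp [epsInteraction, mul_comm, add_comm]
    rw [heq, h]
  rw [hDi, hDj]
  set D := li / lj + lj / li + li * lj * t with hDdef
  have hD : 0 < D := by positivity
  have hD' : lj / li + li / lj + lj * li * t = D := by rw [hDdef]; ring
  rw [hD']
  have he : epsInteraction li lj t = D⁻¹ := rfl
  rw [he] at h1 h2 ⊢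
  have hDe : D * D⁻¹ = 1 := mul_inv_cancel₀ hD.ne'
  have key : -2 * li * (-(1 / lj - lj / li ^ 2 + lj * t) / D ^ 2)
      - lj * (-(1 / li - li / lj ^ 2 + li * t) / D ^ 2)
      = (li / lj - lj / li + 3 * (li * lj * t)) * D⁻¹ ^ 2 := by
    field_simp
    ring
  rw [key]
  have hbe : lj / li * D⁻¹ ≤ eps := h1
  have hTe : 0 ≤ li * lj * t * D⁻¹ := by positivity
  have heinv : 0 < D⁻¹ := by positivity
  have hsplit : (li / lj - lj / li + 3 * (li * lj * t)) * D⁻¹ ^ 2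
      = D⁻¹ - 2 * (lj / li * D⁻¹) * D⁻¹ + 2 * (li * lj * t * D⁻¹) * D⁻¹ := by
    have : (li / lj - lj / li + 3 * (li * lj * t)) = D - 2 * (lj / li) + 2 * (li * lj * t) := by
      rw [hDdef]; ring
    rw [this]
    have : (D - 2 * (lj / li) + 2 * (li * lj * t)) * D⁻¹ ^ 2
        = (D * D⁻¹) * D⁻¹ - 2 * (lj / li * D⁻¹) * D⁻¹ + 2 * (li * lj * t * D⁻¹) * D⁻¹ := by ring
    rw [this, hDe, one_mul]
  rw [hsplit]
  nlinarith [mul_le_mul_of_nonneg_right hbe heinv.le, mul_pos heps heinv]
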